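/- Let T be the Bolyai–Rényi map and L₀ its transfer operator at parameter t = 0. There exists a continuous function h : [0,1] → ℝ with h ≥ 0, ∫₀¹ h(x) dx = 1, and L₀h = h, such that the measure μ with dμ = h dx is a T-invariant Borel probability measure on [0,1) absolutely continuous with respect to Lebesgue measure. -/

import Mathlib

open MeasureTheory Real Filter

/-- The Bolyai–Rényi map. -/
noncomputable def T (x : ℝ) : ℝ :=
  if x < Real.sqrt 2 - 1 then x ^ 2 + 2 * x
  else if x < Real.sqrt 3 - 1 then x ^ 2 + 2 * x - 1
  else x ^ 2 + 2 * x - 2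

/-- The transfer operator of the Bolyai–Rényi map at parameter `t`. -/
noncomputable def Lt (t : ℝ) (f : ℝ → ℝ) : ℝ → ℝ := fun x =>
  ∑ i ∈ Finset.Icc (1 : ℕ) 3,
    (2 * Real.sqrt ((i : ℝ) + x)) ^ (-(1 + t)) * f (Real.sqrt ((i : ℝ) + x) - 1)

noncomputable def wt (i : ℝ) (x : ℝ) : ℝ := (2 * Real.sqrt (i + x))⁻¹
noncomputable def br (i : ℝ) (x : ℝ) : ℝ := Real.sqrt (i + x) - 1
noncomputable def L3 (f : ℝ → ℝ) (x : ℝ) : ℝ :=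
  wt 1 x * f (br 1 x) + wt 2 x * f (br 2 x) + wt 3 x * f (br 3 x)

lemma Lt_eq_L3 (f : ℝ → ℝ) (x : ℝ) : Lt 0 f x = L3 f x := by
  have h3 : Finset.Icc (1:ℕ) 3 = {1, 2, 3} := by decide
  have h2 : ∀ i x : ℝ, (2 * Real.sqrt (i + x)) ^ (-(1 + (0:ℝ)) : ℝ) = wt i x := by
    intro i x
    rw [show -(1 + (0:ℝ)) = -1 by norm_num, Real.rpow_neg_one]; rfl
  rw [Lt, h3]
  rw [Finset.sum_insert (by decide), Finset.sum_insert (by decide), Finset.sum_singleton]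
  push_cast
  rw [h2, h2, h2]
  simp only [L3, br]
  ring

section estimates
variable {i x y : ℝ}

lemma sqrt_add_le (hi : 1 ≤ i) (hx : x ∈ Set.Icc (0:ℝ) 1) : Real.sqrt i ≤ Real.sqrt (i + x) :=
  Real.sqrt_le_sqrt (by linarith [hx.1])

lemma one_le_sqrt_add (hi : 1 ≤ i) (hx : x ∈ Set.Icc (0:ℝ) 1) : 1 ≤ Real.sqrt (i + x) := by
  rw [show (1:ℝ) = Real.sqrt 1 from (Real.sqrt_one).symm]
  exact Real.sqrt_le_sqrt (by linarith [hx.1])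

lemma br_mem (hi : 1 ≤ i) (hi' : i ≤ 3) (hx : x ∈ Set.Icc (0:ℝ) 1) :
    br i x ∈ Set.Icc (0:ℝ) 1 := by
  have h1 := one_le_sqrt_add hi hx
  have h2 : Real.sqrt (i + x) ≤ 2 := by
    rw [show (2:ℝ) = Real.sqrt 4 by
      rw [show (4:ℝ) = 2^2 by norm_num, Real.sqrt_sq]; norm_num]
    exact Real.sqrt_le_sqrt (by linarith [hx.2])
  simp only [br, Set.mem_Icc]
  constructor <;> linarith

lemma wt_pos (hi : 1 ≤ i) (hx : x ∈ Set.Icc (0:ℝ) 1) : 0 < wt i x := by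
  have := one_le_sqrt_add hi hx
  rw [wt]; positivity

lemma wt_le (hi : 1 ≤ i) (hx : x ∈ Set.Icc (0:ℝ) 1) : wt i x ≤ (2 * Real.sqrt i)⁻¹ := by
  have h1 : (0:ℝ) < Real.sqrt i := Real.sqrt_pos.2 (by linarith)
  have := sqrt_add_le hi hx
  rw [wt]
  apply inv_anti₀ (by positivity) (by linarith)

lemma abs_sqrt_sub_sqrt (hi : 1 ≤ i) (hx : x ∈ Set.Icc (0:ℝ) 1) (hy : y ∈ Set.Icc (0:ℝ) 1) :
    |Real.sqrt (i + x) - Real.sqrt (i + y)| ≤ |x - y| / (2 * Real.sqrt i) := by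
  have hsx := one_le_sqrt_add hi hx
  have hsy := one_le_sqrt_add hi hy
  have hix := sqrt_add_le hi hx
  have hiy := sqrt_add_le hi hy
  have hsi : (0:ℝ) < Real.sqrt i := Real.sqrt_pos.2 (by linarith)
  have key : (Real.sqrt (i + x) - Real.sqrt (i + y)) * (Real.sqrt (i + x) + Real.sqrt (i + y))
      = x - y := by
    have h1 : Real.sqrt (i + x) ^ 2 = i + x := Real.sq_sqrt (by linarith [hx.1])
    have h2 : Real.sqrt (i + y) ^ 2 = i + y := Real.sq_sqrt (by linarith [hy.1])
    nlinarith [h1, h2]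
  have habs : |Real.sqrt (i + x) - Real.sqrt (i + y)| * (Real.sqrt (i + x) + Real.sqrt (i + y))
      = |x - y| := by
    rw [show Real.sqrt (i + x) + Real.sqrt (i + y)
        = |Real.sqrt (i + x) + Real.sqrt (i + y)| from (abs_of_pos (by linarith)).symm,
      ← abs_mul, key]
  rw [le_div_iff₀ (by positivity)]
  calc |Real.sqrt (i + x) - Real.sqrt (i + y)| * (2 * Real.sqrt i)
      ≤ |Real.sqrt (i + x) - Real.sqrt (i + y)| * (Real.sqrt (i + x) + Real.sqrt (i + y)) := by
        apply mul_le_mul_of_nonneg_left (by linarith) (abs_nonneg _)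
    _ = |x - y| := habs

end estimates
section lipschitz
open Real Set
variable {i x y : ℝ} {f : ℝ → ℝ}

lemma sqrt_mul_self' (hi : 1 ≤ i) : Real.sqrt i * Real.sqrt i = i :=
  Real.mul_self_sqrt (by linarith)

lemma wt_diff (hi : 1 ≤ i) (hx : x ∈ Set.Icc (0:ℝ) 1) (hy : y ∈ Set.Icc (0:ℝ) 1) :
    |wt i x - wt i y| ≤ |x - y| / (4 * i) := by
  have hsx := one_le_sqrt_add hi hx
  have hsy := one_le_sqrt_add hi hy
  have hix := sqrt_add_le hi hx
  have hiy := sqrt_add_le hi hy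
  have hsi : (1:ℝ) ≤ Real.sqrt i := by
    rw [show (1:ℝ) = Real.sqrt 1 from Real.sqrt_one.symm]
    exact Real.sqrt_le_sqrt hi
  have hii := sqrt_mul_self' hi
  have hdiff : wt i x - wt i y
      = (Real.sqrt (i + y) - Real.sqrt (i + x)) / (2 * Real.sqrt (i + x) * (Real.sqrt (i + y))) := by
    rw [wt, wt]
    field_simp
  have hkey := abs_sqrt_sub_sqrt hi hx hy
  rw [hdiff, abs_div, abs_of_pos (by positivity : (0:ℝ) < 2 * Real.sqrt (i+x) * Real.sqrt (i+y))]
  rw [div_le_div_iff₀ (by positivity) (by positivity)]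
  have h1 : |Real.sqrt (i + y) - Real.sqrt (i + x)| * (2 * Real.sqrt i) ≤ |x - y| := by
    rw [abs_sub_comm]
    calc |Real.sqrt (i + x) - Real.sqrt (i + y)| * (2 * Real.sqrt i)
        ≤ (|x - y| / (2 * Real.sqrt i)) * (2 * Real.sqrt i) := by
          apply mul_le_mul_of_nonneg_right hkey (by positivity)
      _ = |x - y| := by field_simp
  -- goal : |√(i+y) - √(i+x)| * (4 * i) ≤ |x - y| * (2 * √(i+x) * √(i+y))
  set d := |Real.sqrt (i + y) - Real.sqrt (i + x)| with hd
  have hd0 : 0 ≤ d := abs_nonneg _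
  have hprod : Real.sqrt i * Real.sqrt i ≤ Real.sqrt (i+x) * Real.sqrt (i+y) :=
    mul_le_mul hix hiy (by positivity) (by positivity)
  have h6 : i ≤ Real.sqrt i * (Real.sqrt (i+x) * Real.sqrt (i+y)) := by
    nlinarith [mul_le_mul_of_nonneg_left hprod (by positivity : (0:ℝ) ≤ Real.sqrt i)]
  calc d * (4 * i) ≤ d * (4 * (Real.sqrt i * (Real.sqrt (i+x) * Real.sqrt (i+y)))) := by
        apply mul_le_mul_of_nonneg_left (by linarith) hd0
    _ = (d * (2 * Real.sqrt i)) * (2 * (Real.sqrt (i+x) * Real.sqrt (i+y))) := by ring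
    _ ≤ |x - y| * (2 * (Real.sqrt (i+x) * Real.sqrt (i+y))) :=
        mul_le_mul_of_nonneg_right h1 (by positivity)
    _ = |x - y| * (2 * Real.sqrt (i+x) * Real.sqrt (i+y)) := by ring

lemma branch_lip (hi : 1 ≤ i)
    (hx : x ∈ Set.Icc (0:ℝ) 1) (hy : y ∈ Set.Icc (0:ℝ) 1)
    (hf_lip : ∀ a ∈ Set.Icc (0:ℝ) 1, ∀ b ∈ Set.Icc (0:ℝ) 1, |f a - f b| ≤ 6 * |a - b|)
    (hf_bd : ∀ a ∈ Set.Icc (0:ℝ) 1, |f a| ≤ 7) (hi' : i ≤ 3) :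
    |wt i x * f (br i x) - wt i y * f (br i y)| ≤ 13 / (4 * i) * |x - y| := by
  have hbx := br_mem hi hi' hx
  have hby := br_mem hi hi' hy
  have hw0 : 0 < wt i x := wt_pos hi hx
  have hsi : (1:ℝ) ≤ Real.sqrt i := by
    rw [show (1:ℝ) = Real.sqrt 1 from Real.sqrt_one.symm]
    exact Real.sqrt_le_sqrt hi
  have hii := sqrt_mul_self' hi
  have hwle := wt_le hi hx
  have hbrdiff : |br i x - br i y| ≤ |x - y| / (2 * Real.sqrt i) := by
    simpa [br] using abs_sqrt_sub_sqrt hi hx hy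
  have hwd := wt_diff hi hx hy
  have step1 : |wt i x * f (br i x) - wt i y * f (br i y)|
      ≤ wt i x * |f (br i x) - f (br i y)| + |wt i x - wt i y| * |f (br i y)| := by
    have e : wt i x * f (br i x) - wt i y * f (br i y)
        = wt i x * (f (br i x) - f (br i y)) + (wt i x - wt i y) * f (br i y) := by ring
    rw [e]
    refine (abs_add_le _ _).trans ?_
    rw [abs_mul, abs_mul, abs_of_pos hw0]
  refine step1.trans ?_
  have t1 : wt i x * |f (br i x) - f (br i y)|
      ≤ (2 * Real.sqrt i)⁻¹ * (6 * (|x - y| / (2 * Real.sqrt i))) := by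
    apply mul_le_mul hwle ?_ (abs_nonneg _) (by positivity)
    calc |f (br i x) - f (br i y)| ≤ 6 * |br i x - br i y| := hf_lip _ hbx _ hby
      _ ≤ 6 * (|x - y| / (2 * Real.sqrt i)) := by linarith
  have t2 : |wt i x - wt i y| * |f (br i y)| ≤ (|x - y| / (4 * i)) * 7 :=
    mul_le_mul hwd (hf_bd _ hby) (abs_nonneg _) (by positivity)
  have e2 : (2 * Real.sqrt i)⁻¹ * (6 * (|x - y| / (2 * Real.sqrt i))) + (|x - y| / (4 * i)) * 7
      = 13 / (4 * i) * |x - y| := by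
    have hi0 : i ≠ 0 := by linarith
    have hs0 : Real.sqrt i ≠ 0 := by positivity
    have h4 : (2 * Real.sqrt i) * (2 * Real.sqrt i) = 4 * i := by
      rw [show (2 * Real.sqrt i) * (2 * Real.sqrt i) = 4 * (Real.sqrt i * Real.sqrt i) by ring, hii]
    have h5 : (2 * Real.sqrt i)⁻¹ * (6 * (|x - y| / (2 * Real.sqrt i)))
        = 6 * |x - y| / (4 * i) := by
      rw [← h4]; field_simp
    rw [h5]; ring
  linarith

lemma L3_lip
    (hf_lip : ∀ a ∈ Set.Icc (0:ℝ) 1, ∀ b ∈ Set.Icc (0:ℝ) 1, |f a - f b| ≤ 6 * |a - b|)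
    (hf_bd : ∀ a ∈ Set.Icc (0:ℝ) 1, |f a| ≤ 7)
    (hx : x ∈ Set.Icc (0:ℝ) 1) (hy : y ∈ Set.Icc (0:ℝ) 1) :
    |L3 f x - L3 f y| ≤ 6 * |x - y| := by
  have h1 := branch_lip (i := 1) (by norm_num) hx hy hf_lip hf_bd (by norm_num)
  have h2 := branch_lip (i := 2) (by norm_num) hx hy hf_lip hf_bd (by norm_num)
  have h3 := branch_lip (i := 3) (by norm_num) hx hy hf_lip hf_bd (by norm_num)
  have e : L3 f x - L3 f y
      = (wt 1 x * f (br 1 x) - wt 1 y * f (br 1 y))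
        + (wt 2 x * f (br 2 x) - wt 2 y * f (br 2 y))
        + (wt 3 x * f (br 3 x) - wt 3 y * f (br 3 y)) := by
    simp only [L3]; ring
  rw [e]
  have h0 : (0:ℝ) ≤ |x - y| := abs_nonneg _
  refine (abs_add_three _ _ _).trans ?_
  norm_num at h1 h2 h3 ⊢
  linarith

end lipschitz
section integral
open Real intervalIntegral
variable {i x : ℝ} {f : ℝ → ℝ}

lemma continuous_sqrt_shift (i : ℝ) : Continuous fun x : ℝ => Real.sqrt (i + x) :=
  Real.continuous_sqrt.comp (continuous_const.add continuous_id)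

lemma continuous_br (i : ℝ) : Continuous (br i) :=
  (continuous_sqrt_shift i).sub continuous_const

lemma contOn_wt (hi : 1 ≤ i) : ContinuousOn (wt i) (Set.Icc (0:ℝ) 1) := by
  apply ContinuousOn.inv₀
  · exact (continuous_const.mul (continuous_sqrt_shift i)).continuousOn
  · intro a ha
    have := one_le_sqrt_add hi ha
    positivity

lemma hasDerivAt_br (hi : 1 ≤ i) (hx : x ∈ Set.Icc (0:ℝ) 1) :
    HasDerivAt (br i) (wt i x) x := by
  have hne : i + x ≠ 0 := by have := hx.1; positivity
  have h1 : HasDerivAt (fun y : ℝ => i + y) 1 x := (hasDerivAt_id x).const_add i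
  have h2 : HasDerivAt (fun y : ℝ => Real.sqrt (i + y)) (1 / (2 * Real.sqrt (i + x)) * 1) x :=
    (Real.hasDerivAt_sqrt hne).comp x h1
  have h3 := h2.sub_const 1
  show HasDerivAt (fun y => Real.sqrt (i + y) - 1) (wt i x) x
  simpa [br, wt, one_div] using h3

lemma integral_branch (hi : 1 ≤ i) (hf : Continuous f) :
    ∫ x in (0:ℝ)..1, wt i x * f (br i x)
      = ∫ y in (Real.sqrt i - 1)..(Real.sqrt (i+1) - 1), f y := by
  have huIcc : Set.uIcc (0:ℝ) 1 = Set.Icc 0 1 := Set.uIcc_of_le (by norm_num)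
  have hderiv : ∀ x ∈ Set.uIcc (0:ℝ) 1, HasDerivAt (br i) (wt i x) x := by
    rw [huIcc]; exact fun x hx => hasDerivAt_br hi hx
  have hcont : ContinuousOn (wt i) (Set.uIcc (0:ℝ) 1) := by rw [huIcc]; exact contOn_wt hi
  have := intervalIntegral.integral_comp_smul_deriv hderiv hcont hf
  have h0 : br i 0 = Real.sqrt i - 1 := by simp [br]
  have h1 : br i 1 = Real.sqrt (i+1) - 1 := by simp [br, add_comm]
  rw [h0, h1] at this
  simpa [smul_eq_mul, Function.comp] using this

lemma intInt_branch (hi : 1 ≤ i) (hf : Continuous f) :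
    IntervalIntegrable (fun x => wt i x * f (br i x)) MeasureTheory.volume 0 1 := by
  apply ContinuousOn.intervalIntegrable
  rw [Set.uIcc_of_le (by norm_num : (0:ℝ) ≤ 1)]
  exact (contOn_wt hi).mul ((hf.comp (continuous_br i)).continuousOn)

lemma sqrt_four : Real.sqrt 4 = 2 := by
  rw [show (4:ℝ) = 2^2 by norm_num, Real.sqrt_sq (by norm_num : (0:ℝ) ≤ 2)]

lemma L3_integral (hf : Continuous f) :
    ∫ x in (0:ℝ)..1, L3 f x = ∫ x in (0:ℝ)..1, f x := by
  have i1 := integral_branch (i := 1) (by norm_num) hf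
  have i2 := integral_branch (i := 2) (by norm_num) hf
  have i3 := integral_branch (i := 3) (by norm_num) hf
  have hsum : ∫ x in (0:ℝ)..1, L3 f x
      = (∫ x in (0:ℝ)..1, wt 1 x * f (br 1 x)) + (∫ x in (0:ℝ)..1, wt 2 x * f (br 2 x))
        + (∫ x in (0:ℝ)..1, wt 3 x * f (br 3 x)) := by
    rw [show (fun x => L3 f x) = fun x => (wt 1 x * f (br 1 x) + wt 2 x * f (br 2 x))
        + wt 3 x * f (br 3 x) from rfl]
    rw [intervalIntegral.integral_add (((intInt_branch (by norm_num) hf)).add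
      (intInt_branch (by norm_num) hf)) (intInt_branch (by norm_num) hf),
      intervalIntegral.integral_add (intInt_branch (by norm_num) hf)
      (intInt_branch (by norm_num) hf)]
  have hfInt : ∀ a b : ℝ, IntervalIntegrable f MeasureTheory.volume a b :=
    fun a b => hf.intervalIntegrable a b
  rw [hsum, i1, i2, i3]
  rw [Real.sqrt_one, show (1:ℝ)+1 = 2 by norm_num, show (2:ℝ)+1 = 3 by norm_num,
    show (3:ℝ)+1 = 4 by norm_num, sqrt_four]
  rw [intervalIntegral.integral_add_adjacent_intervals (hfInt _ _) (hfInt _ _),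
    intervalIntegral.integral_add_adjacent_intervals (hfInt _ _) (hfInt _ _)]
  norm_num

lemma contOn_L3 (hf : Continuous f) : ContinuousOn (L3 f) (Set.Icc (0:ℝ) 1) := by
  have : ∀ i : ℝ, 1 ≤ i → ContinuousOn (fun x => wt i x * f (br i x)) (Set.Icc (0:ℝ) 1) :=
    fun i hi => (contOn_wt hi).mul ((hf.comp (continuous_br i)).continuousOn)
  exact ((this 1 (by norm_num)).add (this 2 (by norm_num))).add (this 3 (by norm_num))

end integral
section fixedpoint
open BoundedContinuousFunction Set Filter

local notation "I01" => (Set.Icc (0:ℝ) 1)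

noncomputable def extF (F : I01 →ᵇ ℝ) : ℝ → ℝ := fun x => F (Set.projIcc 0 1 zero_le_one x)

lemma continuous_extF (F : I01 →ᵇ ℝ) : Continuous (extF F) :=
  F.continuous.comp continuous_projIcc

lemma extF_of_mem (F : I01 →ᵇ ℝ) {x : ℝ} (hx : x ∈ Set.Icc (0:ℝ) 1) :
    extF F x = F ⟨x, hx⟩ := by rw [extF, Set.projIcc_of_mem]

/-- The invariant compact convex set. -/
def Kset : Set (I01 →ᵇ ℝ) :=
  {F | (∀ x, 0 ≤ F x) ∧ (∀ a b : I01, |F a - F b| ≤ 6 * |(a:ℝ) - (b:ℝ)|) ∧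
       (∫ x in (0:ℝ)..1, extF F x) = 1}

lemma Kset_bound {F : I01 →ᵇ ℝ} (hF : F ∈ Kset) (x : I01) : F x ≤ 7 := by
  obtain ⟨h0, hlip, hint⟩ := hF
  have key : ∀ y ∈ Set.Icc (0:ℝ) 1, F x ≤ extF F y + 6 := by
    intro y hy
    rw [extF_of_mem F hy]
    have h1 := hlip x ⟨y, hy⟩
    have h2 : |(x:ℝ) - y| ≤ 1 := by
      rw [abs_le]; constructor <;>
        [linarith [x.2.1, hy.2] ; linarith [x.2.2, hy.1]]
    have := abs_le.1 h1
    nlinarith [abs_nonneg ((x:ℝ) - y)]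
  have hle : ∫ y in (0:ℝ)..1, (F x : ℝ) ≤ ∫ y in (0:ℝ)..1, (extF F y + 6) := by
    apply intervalIntegral.integral_mono_on (by norm_num)
    · exact intervalIntegrable_const
    · exact ((continuous_extF F).add continuous_const).intervalIntegrable 0 1
    · exact key
  rw [intervalIntegral.integral_const] at hle
  rw [intervalIntegral.integral_add ((continuous_extF F).intervalIntegrable 0 1)
    intervalIntegrable_const, hint, intervalIntegral.integral_const] at hle
  simp at hle
  linarith

lemma Kset_abs_bound {F : I01 →ᵇ ℝ} (hF : F ∈ Kset) (x : I01) : |F x| ≤ 7 := by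
  rw [abs_of_nonneg (hF.1 x)]; exact Kset_bound hF x

lemma Kset_extF_lip {F : I01 →ᵇ ℝ} (hF : F ∈ Kset) :
    ∀ a ∈ Set.Icc (0:ℝ) 1, ∀ b ∈ Set.Icc (0:ℝ) 1, |extF F a - extF F b| ≤ 6 * |a - b| := by
  intro a ha b hb
  rw [extF_of_mem F ha, extF_of_mem F hb]
  exact hF.2.1 ⟨a, ha⟩ ⟨b, hb⟩

lemma Kset_extF_bd {F : I01 →ᵇ ℝ} (hF : F ∈ Kset) :
    ∀ a ∈ Set.Icc (0:ℝ) 1, |extF F a| ≤ 7 := by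
  intro a ha; rw [extF_of_mem F ha]; exact Kset_abs_bound hF ⟨a, ha⟩

/-- The transfer operator as a map on bounded continuous functions on `[0,1]`. -/
noncomputable def LIop (F : I01 →ᵇ ℝ) : I01 →ᵇ ℝ :=
  BoundedContinuousFunction.mkOfCompact
    ⟨fun x : I01 => L3 (extF F) x, (contOn_L3 (continuous_extF F)).restrict⟩

lemma LIop_apply (F : I01 →ᵇ ℝ) (x : I01) : LIop F x = L3 (extF F) x := rfl

lemma LIop_mem_Kset {F : I01 →ᵇ ℝ} (hF : F ∈ Kset) : LIop F ∈ Kset := by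
  refine ⟨?_, ?_, ?_⟩
  · intro x
    rw [LIop_apply, L3]
    have hnn : ∀ y : ℝ, 0 ≤ extF F y := fun y => hF.1 _
    have w1 := wt_pos (i := 1) (by norm_num) x.2
    have w2 := wt_pos (i := 2) (by norm_num) x.2
    have w3 := wt_pos (i := 3) (by norm_num) x.2
    have := hnn (br 1 x); have := hnn (br 2 x); have := hnn (br 3 x)
    positivity
  · intro a b
    rw [LIop_apply, LIop_apply]
    exact L3_lip (Kset_extF_lip hF) (Kset_extF_bd hF) a.2 b.2
  · have hcongr : Set.EqOn (extF (LIop F)) (L3 (extF F)) (Set.uIcc (0:ℝ) 1) := by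
      rw [Set.uIcc_of_le (by norm_num : (0:ℝ) ≤ 1)]
      intro y hy
      rw [extF_of_mem _ hy, LIop_apply]
    rw [intervalIntegral.integral_congr hcongr, L3_integral (continuous_extF F), hF.2.2]

lemma Kset_closed : IsClosed Kset := by
  have h1 : IsClosed {F : I01 →ᵇ ℝ | ∀ x, 0 ≤ F x} := by
    rw [show {F : I01 →ᵇ ℝ | ∀ x, 0 ≤ F x} = ⋂ x, {F : I01 →ᵇ ℝ | 0 ≤ F x} by
      ext F; simp only [Set.mem_setOf_eq, Set.mem_iInter]]
    exact isClosed_iInter fun x =>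
      isClosed_le continuous_const (continuous_eval_const x)
  have h2 : IsClosed {F : I01 →ᵇ ℝ | ∀ a b : I01, |F a - F b| ≤ 6 * |(a:ℝ) - (b:ℝ)|} := by
    rw [show {F : I01 →ᵇ ℝ | ∀ a b : I01, |F a - F b| ≤ 6 * |(a:ℝ) - (b:ℝ)|}
      = ⋂ (a : I01) (b : I01), {F : I01 →ᵇ ℝ | |F a - F b| ≤ 6 * |(a:ℝ) - (b:ℝ)|} by
      ext F; simp only [Set.mem_setOf_eq, Set.mem_iInter]]
    refine isClosed_iInter fun a => isClosed_iInter fun b => ?_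
    exact isClosed_le (((continuous_eval_const a).sub
      (continuous_eval_const b)).abs) continuous_const
  have h3 : IsClosed {F : I01 →ᵇ ℝ | (∫ x in (0:ℝ)..1, extF F x) = 1} := by
    have hlip : LipschitzWith 1 (fun F : I01 →ᵇ ℝ => ∫ x in (0:ℝ)..1, extF F x) := by
      apply LipschitzWith.of_dist_le_mul
      intro F G
      rw [Real.dist_eq, NNReal.coe_one, one_mul,
        ← intervalIntegral.integral_sub ((continuous_extF F).intervalIntegrable 0 1)
          ((continuous_extF G).intervalIntegrable 0 1)]
      have hb : ∀ x ∈ Set.uIoc (0:ℝ) 1, ‖extF F x - extF G x‖ ≤ dist F G := by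
        intro x _
        rw [Real.norm_eq_abs, ← Real.dist_eq]
        exact BoundedContinuousFunction.dist_coe_le_dist _
      calc |∫ x in (0:ℝ)..1, (extF F x - extF G x)|
          ≤ dist F G * |1 - 0| := intervalIntegral.norm_integral_le_of_norm_le_const hb
        _ = dist F G := by norm_num
    exact isClosed_eq hlip.continuous continuous_const
  exact h1.inter (h2.inter h3)

lemma Kset_isCompact : IsCompact Kset := by
  apply BoundedContinuousFunction.arzela_ascoli₂ (Set.Icc (0:ℝ) 7) isCompact_Icc Kset Kset_closed
  · intro F x hF
    exact ⟨hF.1 x, Kset_bound hF x⟩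
  · intro x
    rw [Metric.equicontinuousAt_iff]
    intro ε hε
    refine ⟨ε / 7, by positivity, fun y hy F => ?_⟩
    have h := F.2.2.1 x y
    rw [Real.dist_eq]
    calc |F.1 x - F.1 y| ≤ 6 * |(x:ℝ) - (y:ℝ)| := h
      _ < ε := by
        have : |(x:ℝ) - (y:ℝ)| < ε / 7 := by
          rw [Subtype.dist_eq, Real.dist_eq, abs_sub_comm] at hy
          exact hy
        linarith
    
lemma one_mem_Kset : BoundedContinuousFunction.const I01 (1:ℝ) ∈ Kset := by
  refine ⟨fun x => by norm_num, fun a b => by norm_num [abs_nonneg], ?_⟩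
  have : extF (BoundedContinuousFunction.const I01 (1:ℝ)) = fun _ => (1:ℝ) := rfl
  rw [this]
  simp

lemma Kset_convex : Convex ℝ Kset := by
  intro F hF G hG a b ha hb hab
  refine ⟨?_, ?_, ?_⟩
  · intro x
    simp only [BoundedContinuousFunction.coe_add, BoundedContinuousFunction.coe_smul,
      Pi.add_apply, Pi.smul_apply, smul_eq_mul]
    have := hF.1 x; have := hG.1 x
    positivity
  · intro p q
    simp only [BoundedContinuousFunction.coe_add, BoundedContinuousFunction.coe_smul,
      Pi.add_apply, Pi.smul_apply, smul_eq_mul]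
    have h1 := hF.2.1 p q
    have h2 := hG.2.1 p q
    calc |a * F p + b * G p - (a * F q + b * G q)|
        = |a * (F p - F q) + b * (G p - G q)| := by ring_nf
      _ ≤ |a * (F p - F q)| + |b * (G p - G q)| := abs_add_le _ _
      _ = a * |F p - F q| + b * |G p - G q| := by
          rw [abs_mul, abs_mul, abs_of_nonneg ha, abs_of_nonneg hb]
      _ ≤ a * (6 * |(p:ℝ) - (q:ℝ)|) + b * (6 * |(p:ℝ) - (q:ℝ)|) := by
          apply add_le_add <;> [exact mul_le_mul_of_nonneg_left h1 ha;
            exact mul_le_mul_of_nonneg_left h2 hb]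
      _ = 6 * |(p:ℝ) - (q:ℝ)| := by rw [← add_mul, hab]; ring
  · have he : extF (a • F + b • G) = fun y => a * extF F y + b * extF G y := by
      funext y
      simp [extF, BoundedContinuousFunction.coe_add, BoundedContinuousFunction.coe_smul]
    rw [he, intervalIntegral.integral_add
      (show IntervalIntegrable (fun y => a * extF F y) volume 0 1 from
        ((continuous_const.mul (continuous_extF F))).intervalIntegrable 0 1)
      (show IntervalIntegrable (fun y => b * extF G y) volume 0 1 from
        ((continuous_const.mul (continuous_extF G))).intervalIntegrable 0 1),
      intervalIntegral.integral_const_mul, intervalIntegral.integral_const_mul,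
      hF.2.2, hG.2.2]
    simpa using hab

end fixedpoint
section cesaro
open BoundedContinuousFunction Set Filter Topology

local notation "I01" => (Set.Icc (0:ℝ) 1)

lemma L3_smul_fun (c : ℝ) (f : ℝ → ℝ) (x : ℝ) : L3 (fun y => c * f y) x = c * L3 f x := by
  simp only [L3]; ring

lemma L3_finsum (t : Finset ℕ) (g : ℕ → ℝ → ℝ) (x : ℝ) :
    L3 (fun y => ∑ k ∈ t, g k y) x = ∑ k ∈ t, L3 (g k) x := by
  simp only [L3, Finset.mul_sum, Finset.sum_add_distrib]

lemma extF_decomp (n : ℕ) (Fk : ℕ → I01 →ᵇ ℝ) :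
    extF ((n+1:ℝ)⁻¹ • ∑ k ∈ Finset.range (n+1), Fk k)
      = fun y => (n+1:ℝ)⁻¹ * ∑ k ∈ Finset.range (n+1), extF (Fk k) y := by
  funext y
  simp [extF, Finset.sum_apply]

lemma LIop_cesaro (n : ℕ) (F₀ : I01 →ᵇ ℝ) :
    LIop ((n+1:ℝ)⁻¹ • ∑ k ∈ Finset.range (n+1), (LIop^[k] F₀))
      = (n+1:ℝ)⁻¹ • ∑ k ∈ Finset.range (n+1), (LIop^[k+1] F₀) := by
  ext x
  calc LIop ((n+1:ℝ)⁻¹ • ∑ k ∈ Finset.range (n+1), (LIop^[k] F₀)) x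
      = L3 (extF ((n+1:ℝ)⁻¹ • ∑ k ∈ Finset.range (n+1), (LIop^[k] F₀))) x := rfl
    _ = L3 (fun y => (n+1:ℝ)⁻¹ * ∑ k ∈ Finset.range (n+1), extF (LIop^[k] F₀) y) x := by
        rw [extF_decomp]
    _ = (n+1:ℝ)⁻¹ * L3 (fun y => ∑ k ∈ Finset.range (n+1), extF (LIop^[k] F₀) y) x :=
        L3_smul_fun _ _ x
    _ = (n+1:ℝ)⁻¹ * ∑ k ∈ Finset.range (n+1), L3 (extF (LIop^[k] F₀)) x := by
        exact congrArg _ (L3_finsum _ _ x)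
    _ = (n+1:ℝ)⁻¹ * ∑ k ∈ Finset.range (n+1), (LIop^[k+1] F₀) x := by
        refine congrArg _ (Finset.sum_congr rfl fun k _ => ?_)
        rw [Function.iterate_succ_apply']
        rfl
    _ = ((n+1:ℝ)⁻¹ • ∑ k ∈ Finset.range (n+1), (LIop^[k+1] F₀)) x := by
        simp [Finset.sum_apply]

lemma Kset_norm_le {F : I01 →ᵇ ℝ} (hF : F ∈ Kset) : ‖F‖ ≤ 7 := by
  rw [BoundedContinuousFunction.norm_le (by norm_num : (0:ℝ) ≤ 7)]
  intro x
  rw [Real.norm_eq_abs]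
  exact Kset_abs_bound hF x

lemma LIop_lipschitz : LipschitzWith 2 LIop := by
  apply LipschitzWith.of_dist_le_mul
  intro F G
  rw [NNReal.coe_ofNat]
  rw [BoundedContinuousFunction.dist_le (by positivity)]
  intro x
  rw [LIop_apply, LIop_apply, Real.dist_eq]
  have hd : ∀ y : ℝ, |extF F y - extF G y| ≤ dist F G := by
    intro y
    rw [extF, extF, ← Real.dist_eq]
    exact BoundedContinuousFunction.dist_coe_le_dist _
  have hw : ∀ i : ℝ, 1 ≤ i → wt i (x:ℝ) ≤ 1/2 := by
    intro i hi
    refine (wt_le hi x.2).trans ?_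
    have : (1:ℝ) ≤ Real.sqrt i := by
      rw [show (1:ℝ) = Real.sqrt 1 from Real.sqrt_one.symm]
      exact Real.sqrt_le_sqrt hi
    rw [show (1:ℝ)/2 = (2:ℝ)⁻¹ by norm_num]
    apply inv_anti₀ (by norm_num)
    linarith
  have hw0 : ∀ i : ℝ, 1 ≤ i → 0 ≤ wt i (x:ℝ) := fun i hi => (wt_pos hi x.2).le
  have e : L3 (extF F) (x:ℝ) - L3 (extF G) (x:ℝ)
      = wt 1 x * (extF F (br 1 x) - extF G (br 1 x))
        + wt 2 x * (extF F (br 2 x) - extF G (br 2 x))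
        + wt 3 x * (extF F (br 3 x) - extF G (br 3 x)) := by
    simp only [L3]; ring
  rw [e]
  have hterm : ∀ i : ℝ, 1 ≤ i → |wt i (x:ℝ) * (extF F (br i x) - extF G (br i x))|
      ≤ (1/2) * dist F G := by
    intro i hi
    rw [abs_mul, abs_of_nonneg (hw0 i hi)]
    exact mul_le_mul (hw i hi) (hd _) (abs_nonneg _) (by norm_num)
  calc |wt 1 x * (extF F (br 1 x) - extF G (br 1 x))
        + wt 2 x * (extF F (br 2 x) - extF G (br 2 x))
        + wt 3 x * (extF F (br 3 x) - extF G (br 3 x))|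
      ≤ |wt 1 x * (extF F (br 1 x) - extF G (br 1 x))|
        + |wt 2 x * (extF F (br 2 x) - extF G (br 2 x))|
        + |wt 3 x * (extF F (br 3 x) - extF G (br 3 x))| := abs_add_three _ _ _
    _ ≤ (1/2) * dist F G + (1/2) * dist F G + (1/2) * dist F G := by
        have h1 := hterm 1 (by norm_num)
        have h2 := hterm 2 (by norm_num)
        have h3 := hterm 3 (by norm_num)
        linarith
    _ ≤ 2 * dist F G := by
        have := dist_nonneg (x := F) (y := G)
        linarith

theorem exists_LIop_fixed : ∃ G ∈ Kset, LIop G = G := by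
  classical
  set F₀ : I01 →ᵇ ℝ := BoundedContinuousFunction.const I01 (1:ℝ) with hF₀
  have hiter : ∀ k, LIop^[k] F₀ ∈ Kset := by
    intro k
    induction k with
    | zero => exact one_mem_Kset
    | succ k ih => rw [Function.iterate_succ_apply']; exact LIop_mem_Kset ih
  set a : ℕ → (I01 →ᵇ ℝ) :=
    fun n => (n+1:ℝ)⁻¹ • ∑ k ∈ Finset.range (n+1), (LIop^[k] F₀) with ha
  have haK : ∀ n, a n ∈ Kset := by
    intro n
    have hmem := Kset_convex.sum_mem (t := Finset.range (n+1))
      (w := fun _ => (n+1:ℝ)⁻¹) (z := fun k => LIop^[k] F₀)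
      (fun i _ => by positivity)
      (by
        rw [Finset.sum_const, Finset.card_range, nsmul_eq_mul]
        have : ((n:ℝ)+1) ≠ 0 := by positivity
        push_cast
        field_simp)
      (fun i _ => hiter i)
    have : a n = ∑ k ∈ Finset.range (n+1), (n+1:ℝ)⁻¹ • (LIop^[k] F₀) := Finset.smul_sum
    rwa [this]
  have hdist : ∀ n : ℕ, dist (LIop (a n)) (a n) ≤ 14 / ((n:ℝ)+1) := by
    intro n
    rw [ha]
    simp only []
    rw [LIop_cesaro n F₀, dist_eq_norm,
      ← smul_sub ((n:ℝ)+1)⁻¹ (∑ k ∈ Finset.range (n+1), (LIop^[k+1] F₀))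
        (∑ k ∈ Finset.range (n+1), (LIop^[k] F₀))]
    have hsum : (∑ k ∈ Finset.range (n+1), (LIop^[k+1] F₀))
        - (∑ k ∈ Finset.range (n+1), (LIop^[k] F₀)) = LIop^[n+1] F₀ - F₀ := by
      rw [← Finset.sum_sub_distrib, Finset.sum_range_sub (fun k => LIop^[k] F₀)]
      simp
    rw [hsum, norm_smul, Real.norm_eq_abs, abs_of_pos (by positivity : (0:ℝ) < (n+1:ℝ)⁻¹)]
    have hn : ‖LIop^[n+1] F₀ - F₀‖ ≤ 14 := by
      refine (norm_sub_le _ _).trans ?_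
      have h1 := Kset_norm_le (hiter (n+1))
      have h2 := Kset_norm_le (hiter 0)
      simp only [Function.iterate_zero_apply] at h2
      linarith
    rw [div_eq_inv_mul]
    push_cast
    exact mul_le_mul_of_nonneg_left hn (by positivity)
  obtain ⟨G, hGK, φ, hφ, hconv⟩ := Kset_isCompact.tendsto_subseq haK
  refine ⟨G, hGK, ?_⟩
  have h1 : Tendsto (fun n => LIop (a (φ n))) atTop (𝓝 (LIop G)) :=
    (LIop_lipschitz.continuous.tendsto G).comp hconv
  have htend : Tendsto (fun n : ℕ => 14 / ((n:ℝ)+1)) atTop (𝓝 0) := by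
    apply Filter.Tendsto.div_atTop (tendsto_const_nhds (x := (14:ℝ)))
    exact tendsto_atTop_add_const_right atTop 1 tendsto_natCast_atTop_atTop
  have h2 : Tendsto (fun n => dist (LIop (a (φ n))) (a (φ n))) atTop (𝓝 0) := by
    apply squeeze_zero (fun n => dist_nonneg)
      (g := fun n : ℕ => 14 / ((n:ℝ)+1)) ?_ htend
    intro n
    refine (hdist (φ n)).trans ?_
    apply div_le_div_of_nonneg_left (by norm_num) (by positivity)
    have h5 : n ≤ φ n := hφ.le_apply
    have h6 : (n:ℝ) ≤ (φ n : ℝ) := Nat.cast_le.2 h5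
    linarith
  have h3 : Tendsto (fun n => LIop (a (φ n))) atTop (𝓝 G) := by
    rw [tendsto_iff_dist_tendsto_zero]
    apply squeeze_zero (fun n => dist_nonneg)
      (g := fun n => dist (LIop (a (φ n))) (a (φ n)) + dist (a (φ n)) G) ?_ ?_
    · intro n
      exact dist_triangle _ _ _
    · have h4 : Tendsto (fun n => dist (a (φ n)) G) atTop (𝓝 0) :=
        tendsto_iff_dist_tendsto_zero.1 hconv
      simpa using h2.add h4
  exact tendsto_nhds_unique h1 h3

end cesaro
section measurepart
open MeasureTheory Real Set

noncomputable def Tphi (i : ℝ) (x : ℝ) : ℝ := (1 + x)^2 - i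

lemma Tphi_br (i y : ℝ) (hy : 0 ≤ i + y) : Tphi i (br i y) = y := by
  simp only [Tphi, br]
  rw [show 1 + (Real.sqrt (i + y) - 1) = Real.sqrt (i + y) by ring, Real.sq_sqrt hy]
  ring

lemma br_Tphi (i x : ℝ) (hx : 0 ≤ 1 + x) : br i (Tphi i x) = x := by
  simp only [Tphi, br]
  rw [show i + ((1 + x)^2 - i) = (1 + x)^2 by ring, Real.sqrt_sq hx]
  ring

lemma one_le_sqrt' {i : ℝ} (hi : 1 ≤ i) : 1 ≤ Real.sqrt i := by
  rw [show (1:ℝ) = Real.sqrt 1 from Real.sqrt_one.symm]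
  exact Real.sqrt_le_sqrt hi

lemma br_image {i : ℝ} (hi : 1 ≤ i) (A : Set ℝ) :
    br i '' (A ∩ Set.Ico 0 1)
      = (Set.Ico (Real.sqrt i - 1) (Real.sqrt (i+1) - 1)) ∩ Tphi i ⁻¹' A := by
  ext z
  constructor
  · rintro ⟨y, ⟨hyA, hy0, hy1⟩, rfl⟩
    refine ⟨⟨?_, ?_⟩, ?_⟩
    · simp only [br]
      have : Real.sqrt i ≤ Real.sqrt (i + y) := Real.sqrt_le_sqrt (by linarith)
      linarith
    · simp only [br]
      have : Real.sqrt (i + y) < Real.sqrt (i + 1) :=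
        Real.sqrt_lt_sqrt (by linarith) (by linarith)
      linarith
    · rw [Set.mem_preimage, Tphi_br i y (by linarith)]
      exact hyA
  · rintro ⟨⟨hz1, hz2⟩, hzA⟩
    rw [Set.mem_preimage] at hzA
    have hsi := one_le_sqrt' hi
    have hz0 : 0 ≤ 1 + z := by linarith
    have hsq : Real.sqrt i * Real.sqrt i = i := Real.mul_self_sqrt (by linarith)
    have hsq1 : Real.sqrt (i+1) * Real.sqrt (i+1) = i + 1 := Real.mul_self_sqrt (by linarith)
    have hmem : Tphi i z ∈ Set.Ico (0:ℝ) 1 := by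
      constructor
      · simp only [Tphi]
        nlinarith [hz1, hsq]
      · simp only [Tphi]
        nlinarith [hz2, hsq1, Real.sqrt_nonneg (i+1)]
    exact ⟨Tphi i z, ⟨hzA, hmem⟩, br_Tphi i z hz0⟩

lemma br_injOn {i : ℝ} (hi : 1 ≤ i) (s : Set ℝ) (hs : s ⊆ Set.Ico (0:ℝ) 1) :
    Set.InjOn (br i) s := by
  intro y1 h1 y2 h2 heq
  have e1 : Real.sqrt (i + y1) = Real.sqrt (i + y2) := by
    simp only [br] at heq; linarith
  have q1 : (0:ℝ) ≤ i + y1 := by have := (hs h1).1; linarith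
  have q2 : (0:ℝ) ≤ i + y2 := by have := (hs h2).1; linarith
  have := congrArg (fun t => t * t) e1
  simp only [Real.mul_self_sqrt q1, Real.mul_self_sqrt q2] at this
  linarith

lemma sqrt2_lt_2 : Real.sqrt 2 < 2 := by
  nlinarith [Real.sq_sqrt (show (0:ℝ) ≤ 2 by norm_num), Real.sqrt_nonneg 2]

lemma sqrt3_lt_2 : Real.sqrt 3 < 2 := by
  nlinarith [Real.sq_sqrt (show (0:ℝ) ≤ 3 by norm_num), Real.sqrt_nonneg 3]

lemma sqrt2_le_sqrt3 : Real.sqrt 2 ≤ Real.sqrt 3 := Real.sqrt_le_sqrt (by norm_num)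

lemma T_eq1 {x : ℝ} (hx : x ∈ Set.Ico (0:ℝ) (Real.sqrt 2 - 1)) : T x = Tphi 1 x := by
  rw [T, if_pos hx.2, Tphi]; ring

lemma T_eq2 {x : ℝ} (hx : x ∈ Set.Ico (Real.sqrt 2 - 1) (Real.sqrt 3 - 1)) :
    T x = Tphi 2 x := by
  rw [T, if_neg (by push_neg; exact hx.1), if_pos hx.2, Tphi]; ring

lemma T_eq3 {x : ℝ} (hx : x ∈ Set.Ico (Real.sqrt 3 - 1) (1:ℝ)) : T x = Tphi 3 x := by
  have h1 : ¬ x < Real.sqrt 2 - 1 := by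
    push_neg
    have := sqrt2_le_sqrt3
    linarith [hx.1]
  have h2 : ¬ x < Real.sqrt 3 - 1 := by push_neg; exact hx.1
  rw [T, if_neg h1, if_neg h2, Tphi]; ring

lemma measurable_T : Measurable T := by
  have h1 : Measurable fun x : ℝ => x ^ 2 + 2 * x :=
    ((continuous_pow 2).add (continuous_const.mul continuous_id)).measurable
  refine Measurable.ite measurableSet_Iio h1 ?_
  refine Measurable.ite measurableSet_Iio (h1.sub measurable_const) (h1.sub measurable_const)

lemma continuous_Tphi (i : ℝ) : Continuous (Tphi i) := by
  unfold Tphi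
  exact (((continuous_const.add continuous_id).pow 2).sub continuous_const)

lemma T_split (A : Set ℝ) :
    T ⁻¹' A ∩ Set.Ico 0 1
      = ((Set.Ico (0:ℝ) (Real.sqrt 2 - 1) ∩ Tphi 1 ⁻¹' A)
          ∪ (Set.Ico (Real.sqrt 2 - 1) (Real.sqrt 3 - 1) ∩ Tphi 2 ⁻¹' A))
        ∪ (Set.Ico (Real.sqrt 3 - 1) 1 ∩ Tphi 3 ⁻¹' A) := by
  have h21 := one_le_sqrt' (show (1:ℝ) ≤ 2 by norm_num)
  have h31 := one_le_sqrt' (show (1:ℝ) ≤ 3 by norm_num)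
  have h22 := sqrt2_lt_2
  have h32 := sqrt3_lt_2
  have h23 := sqrt2_le_sqrt3
  ext x
  simp only [Set.mem_inter_iff, Set.mem_preimage, Set.mem_union, Set.mem_Ico]
  constructor
  · rintro ⟨hA, h0, h1⟩
    rcases lt_or_ge x (Real.sqrt 2 - 1) with h | h
    · exact Or.inl (Or.inl ⟨⟨h0, h⟩, by rwa [← T_eq1 ⟨h0, h⟩]⟩)
    · rcases lt_or_ge x (Real.sqrt 3 - 1) with h' | h'
      · exact Or.inl (Or.inr ⟨⟨h, h'⟩, by rwa [← T_eq2 ⟨h, h'⟩]⟩)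
      · exact Or.inr ⟨⟨h', h1⟩, by rwa [← T_eq3 ⟨h', h1⟩]⟩
  · rintro ((⟨⟨h0, h⟩, hA⟩ | ⟨⟨h, h'⟩, hA⟩) | ⟨⟨h', h1⟩, hA⟩)
    · exact ⟨by rwa [T_eq1 ⟨h0, h⟩], h0, by linarith⟩
    · exact ⟨by rwa [T_eq2 ⟨h, h'⟩], by linarith, by linarith⟩
    · exact ⟨by rwa [T_eq3 ⟨h', h1⟩], by linarith, h1⟩

end measurepart
section final
open MeasureTheory Real Set

lemma measurable_wt (i : ℝ) : Measurable (wt i) := by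
  unfold wt
  exact ((continuous_const.mul (continuous_sqrt_shift i)).measurable).inv

lemma branch_cov {i : ℝ} (hi : 1 ≤ i) (A : Set ℝ) (hA : MeasurableSet A) (g : ℝ → ENNReal) :
    ∫⁻ x in (Set.Ico (Real.sqrt i - 1) (Real.sqrt (i+1) - 1)) ∩ Tphi i ⁻¹' A, g x
      = ∫⁻ y in A ∩ Set.Ico 0 1, ENNReal.ofReal (wt i y) * g (br i y) := by
  have hs : MeasurableSet (A ∩ Set.Ico (0:ℝ) 1) := hA.inter measurableSet_Ico
  have hder : ∀ y ∈ A ∩ Set.Ico (0:ℝ) 1,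
      HasFDerivWithinAt (br i) ((1 : ℝ →L[ℝ] ℝ).smulRight (wt i y)) (A ∩ Set.Ico 0 1) y := by
    intro y hy
    have hyIcc : y ∈ Set.Icc (0:ℝ) 1 := ⟨hy.2.1, hy.2.2.le⟩
    exact ((hasDerivAt_br hi hyIcc).hasFDerivAt).hasFDerivWithinAt
  have hinj := br_injOn hi (A ∩ Set.Ico 0 1) Set.inter_subset_right
  have hcov := lintegral_image_eq_lintegral_abs_det_fderiv_mul volume hs hder hinj g
  rw [br_image hi A] at hcov
  rw [hcov]
  refine setLIntegral_congr_fun hs (fun y hy => ?_)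
  have hyIcc : y ∈ Set.Icc (0:ℝ) 1 := ⟨hy.2.1, hy.2.2.le⟩
  rw [ContinuousLinearMap.det_smulRight, ContinuousLinearMap.one_apply, one_mul, abs_of_pos (wt_pos hi hyIcc)]

theorem exists_invariant_density' :
    ∃ h : ℝ → ℝ,
      ContinuousOn h (Set.Icc 0 1) ∧
      (∀ x ∈ Set.Icc (0 : ℝ) 1, 0 ≤ h x) ∧
      (∫ x in Set.Icc (0 : ℝ) 1, h x) = 1 ∧
      (∀ x ∈ Set.Icc (0 : ℝ) 1, Lt 0 h x = h x) ∧
      (let μ : Measure ℝ :=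
        (volume.restrict (Set.Ico (0 : ℝ) 1)).withDensity (fun x => ENNReal.ofReal (h x))
       IsProbabilityMeasure μ ∧
        (∀ A : Set ℝ, MeasurableSet A → μ (T ⁻¹' A) = μ A) ∧ μ ≪ volume) := by
  obtain ⟨G, hGK, hGfix⟩ := exists_LIop_fixed
  have hGnn := hGK.1
  have hGint := hGK.2.2
  set h : ℝ → ℝ := extF G with hh
  have hcont : Continuous h := continuous_extF G
  have hnn : ∀ x : ℝ, 0 ≤ h x := fun x => hGnn _
  have hfix : ∀ x ∈ Set.Icc (0:ℝ) 1, L3 h x = h x := by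
    intro x hx
    have h1 : LIop G ⟨x, hx⟩ = G ⟨x, hx⟩ := by rw [hGfix]
    rw [LIop_apply] at h1
    calc L3 h x = G ⟨x, hx⟩ := h1
      _ = h x := (extF_of_mem G hx).symm
  have hint01 : (∫ x in Set.Icc (0:ℝ) 1, h x) = 1 := by
    rw [MeasureTheory.integral_Icc_eq_integral_Ioc,
      ← intervalIntegral.integral_of_le (by norm_num : (0:ℝ) ≤ 1)]
    exact hGint
  refine ⟨h, hcont.continuousOn, fun x _ => hnn x, hint01, fun x hx =>
    (Lt_eq_L3 h x).trans (hfix x hx), ?_⟩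
  intro μ
  have hμA : ∀ A : Set ℝ, MeasurableSet A →
      μ A = ∫⁻ y in A ∩ Set.Ico 0 1, ENNReal.ofReal (h y) := by
    intro A hA
    show ((volume.restrict (Set.Ico (0 : ℝ) 1)).withDensity
      (fun x => ENNReal.ofReal (h x))) A = _
    rw [withDensity_apply _ hA, Measure.restrict_restrict hA]
  have hIntOn : IntegrableOn h (Set.Ico (0:ℝ) 1) :=
    (hcont.integrableOn_Icc).mono_set Set.Ico_subset_Icc_self
  refine ⟨⟨?_⟩, ?_, ?_⟩
  · -- probability
    rw [hμA Set.univ MeasurableSet.univ, Set.univ_inter]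
    rw [← ofReal_integral_eq_lintegral_ofReal hIntOn
      (Filter.Eventually.of_forall fun x => hnn x)]
    rw [show (∫ x in Set.Ico (0:ℝ) 1, h x) = ∫ x in Set.Icc (0:ℝ) 1, h x from
      (MeasureTheory.integral_Icc_eq_integral_Ico).symm, hint01, ENNReal.ofReal_one]
  · -- invariance
    intro A hA
    have hTA : MeasurableSet (T ⁻¹' A) := measurable_T hA
    rw [hμA _ hTA, hμA _ hA]
    rw [T_split A]
    have h21 := one_le_sqrt' (show (1:ℝ) ≤ 2 by norm_num)
    have h31 := one_le_sqrt' (show (1:ℝ) ≤ 3 by norm_num)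
    have h23 := sqrt2_le_sqrt3
    have m1 : MeasurableSet (Set.Ico (0:ℝ) (Real.sqrt 2 - 1) ∩ Tphi 1 ⁻¹' A) :=
      measurableSet_Ico.inter ((continuous_Tphi 1).measurable hA)
    have m2 : MeasurableSet (Set.Ico (Real.sqrt 2 - 1) (Real.sqrt 3 - 1) ∩ Tphi 2 ⁻¹' A) :=
      measurableSet_Ico.inter ((continuous_Tphi 2).measurable hA)
    have m3 : MeasurableSet (Set.Ico (Real.sqrt 3 - 1) 1 ∩ Tphi 3 ⁻¹' A) :=
      measurableSet_Ico.inter ((continuous_Tphi 3).measurable hA)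
    have d12 : Disjoint (Set.Ico (0:ℝ) (Real.sqrt 2 - 1) ∩ Tphi 1 ⁻¹' A)
        (Set.Ico (Real.sqrt 2 - 1) (Real.sqrt 3 - 1) ∩ Tphi 2 ⁻¹' A) :=
      (Set.Ico_disjoint_Ico_same).mono Set.inter_subset_left Set.inter_subset_left
    have d123 : Disjoint ((Set.Ico (0:ℝ) (Real.sqrt 2 - 1) ∩ Tphi 1 ⁻¹' A)
        ∪ (Set.Ico (Real.sqrt 2 - 1) (Real.sqrt 3 - 1) ∩ Tphi 2 ⁻¹' A))
        (Set.Ico (Real.sqrt 3 - 1) 1 ∩ Tphi 3 ⁻¹' A) := by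
      refine (Set.Ico_disjoint_Ico_same (a := (0:ℝ)) (b := Real.sqrt 3 - 1) (c := 1)).mono
        ?_ Set.inter_subset_left
      refine Set.union_subset ?_ ?_
      · exact Set.inter_subset_left.trans (Set.Ico_subset_Ico_right (by linarith))
      · exact Set.inter_subset_left.trans (Set.Ico_subset_Ico_left (by linarith))
    rw [lintegral_union m3 d123, lintegral_union m2 d12]
    have e1 : Set.Ico (0:ℝ) (Real.sqrt 2 - 1)
        = Set.Ico (Real.sqrt 1 - 1) (Real.sqrt (1+1) - 1) := by
      rw [Real.sqrt_one]; norm_num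
    have e2 : Set.Ico (Real.sqrt 2 - 1) (Real.sqrt 3 - 1)
        = Set.Ico (Real.sqrt 2 - 1) (Real.sqrt (2+1) - 1) := by norm_num
    have e3 : Set.Ico (Real.sqrt 3 - 1) (1:ℝ)
        = Set.Ico (Real.sqrt 3 - 1) (Real.sqrt (3+1) - 1) := by
      rw [show (3:ℝ)+1 = 4 by norm_num, sqrt_four]; norm_num
    rw [e1, e2, e3]
    rw [branch_cov (by norm_num : (1:ℝ) ≤ 1) A hA,
      branch_cov (by norm_num : (1:ℝ) ≤ 2) A hA,
      branch_cov (by norm_num : (1:ℝ) ≤ 3) A hA]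
    have mt : ∀ i : ℝ, Measurable fun y => ENNReal.ofReal (wt i y)
        * ENNReal.ofReal (h (br i y)) := by
      intro i
      exact (ENNReal.measurable_ofReal.comp (measurable_wt i)).mul
        (ENNReal.measurable_ofReal.comp ((hcont.comp (continuous_br i)).measurable))
    rw [← lintegral_add_left (mt 1), ← lintegral_add_left (show Measurable fun y =>
      ENNReal.ofReal (wt 1 y) * ENNReal.ofReal (h (br 1 y))
        + ENNReal.ofReal (wt 2 y) * ENNReal.ofReal (h (br 2 y)) from (mt 1).add (mt 2))]
    refine setLIntegral_congr_fun (hA.inter measurableSet_Ico)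
      (fun y hy => ?_)
    have hyIcc : y ∈ Set.Icc (0:ℝ) 1 := ⟨hy.2.1, hy.2.2.le⟩
    have w1 := (wt_pos (i := 1) (by norm_num) hyIcc).le
    have w2 := (wt_pos (i := 2) (by norm_num) hyIcc).le
    have w3 := (wt_pos (i := 3) (by norm_num) hyIcc).le
    rw [← ENNReal.ofReal_mul w1, ← ENNReal.ofReal_mul w2, ← ENNReal.ofReal_mul w3,
      ← ENNReal.ofReal_add (mul_nonneg w1 (hnn _)) (mul_nonneg w2 (hnn _)),
      ← ENNReal.ofReal_add (add_nonneg (mul_nonneg w1 (hnn _)) (mul_nonneg w2 (hnn _)))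
        (mul_nonneg w3 (hnn _))]
    exact congrArg ENNReal.ofReal (hfix y hyIcc)
  · -- absolute continuity
    exact (withDensity_absolutelyContinuous _ _).trans
      (Measure.absolutelyContinuous_of_le Measure.restrict_le_self)

theorem exists_invariant_density :
    ∃ h : ℝ → ℝ,
      ContinuousOn h (Set.Icc 0 1) ∧
      (∀ x ∈ Set.Icc (0 : ℝ) 1, 0 ≤ h x) ∧
      (∫ x in Set.Icc (0 : ℝ) 1, h x) = 1 ∧
      (∀ x ∈ Set.Icc (0 : ℝ) 1, Lt 0 h x = h x) ∧
      (let μ : Measure ℝ :=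
        (volume.restrict (Set.Ico (0 : ℝ) 1)).withDensity (fun x => ENNReal.ofReal (h x))
       IsProbabilityMeasure μ ∧
        (∀ A : Set ℝ, MeasurableSet A → μ (T ⁻¹' A) = μ A) ∧ μ ≪ volume) :=
  exists_invariant_density'

end final
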